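/- arXiv:1203.5905 — 2 statements merged into one kernel-verified Lean document; each statement's English description precedes it below -/
import Mathlib

section
/- If B is a connected small category (its underlying undirected graph is connected and B is nonempty) and F: C → B is a functor that induces bijections between the star at c and the star at F(c) for every object c of C, and C is nonempty, then F is surjective on objects. -/
open CategoryTheory

universe w v v' v'' u u' u''

section Cov
variable {C : Type u} [Category.{v} C] {B : Type u'} [Category.{v'} B]

/-- The source star at `b`: morphisms with source `b`. -/
def SourceStar (b : B) : Type _ := Σ c : B, b ⟶ c
/-- The target star at `b`: morphisms with target `b`. -/
def TargetStar (b : B) : Type _ := Σ c : B, c ⟶ b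
/-- The star at `b`: disjoint union of the source star and the target star. -/
def CatStar (b : B) : Type _ := SourceStar b ⊕ TargetStar b

def sourceStarMap (F : C ⥤ B) (c : C) : SourceStar c → SourceStar (F.obj c) :=
  fun p => ⟨F.obj p.1, F.map p.2⟩
def targetStarMap (F : C ⥤ B) (c : C) : TargetStar c → TargetStar (F.obj c) :=
  fun p => ⟨F.obj p.1, F.map p.2⟩
/-- The map induced by `F` from the star at `c` to the star at `F.obj c`. -/
def starMap (F : C ⥤ B) (c : C) : CatStar c → CatStar (F.obj c) :=
  Sum.map (sourceStarMap F c) (targetStarMap F c)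

/-- A covering of categories: surjective on objects and bijective on stars. -/
def IsCovering (F : C ⥤ B) : Prop :=
  Function.Surjective F.obj ∧ ∀ c : C, Function.Bijective (starMap F c)

/-- A Galois covering: a covering with connected total category whose automorphism
group acts transitively on the fibres. -/
def IsGaloisCovering (F : C ⥤ B) : Prop :=
  IsCovering F ∧ IsConnected C ∧
    ∀ c c' : C, F.obj c = F.obj c' →
      ∃ H : C ⥤ C, (H ⋙ F = F) ∧ (∃ H' : C ⥤ C, H ⋙ H' = 𝟭 C ∧ H' ⋙ H = 𝟭 C) ∧ H.obj c = c'

end Cov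

/-- If `B` is connected, `C` is nonempty and `F : C ⥤ B` induces bijections on stars,
then `F` is surjective on objects. -/
theorem surjective_on_objects_of_bijective_on_stars
    {C : Type u} [Category.{v} C] {B : Type u'} [Category.{v'} B]
    (F : C ⥤ B) [IsConnected B] [Nonempty C]
    (h : ∀ c : C, Function.Bijective (starMap F c)) :
    Function.Surjective F.obj := by
  obtain ⟨c₀⟩ := ‹Nonempty C›
  intro b
  refine induct_on_objects (Set.range F.obj) (j₀ := F.obj c₀) ⟨c₀, rfl⟩ ?_ b
  intro b₁ b₂ f
  constructor
  · rintro ⟨c, rfl⟩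
    obtain ⟨x, hx⟩ := (h c).2 (Sum.inl ⟨b₂, f⟩)
    rcases x with ⟨c', g⟩ | ⟨c', g⟩
    · exact ⟨c', congrArg Sigma.fst (Sum.inl.inj hx)⟩
    · exact absurd hx (by intro h'; cases h')
  · rintro ⟨c, rfl⟩
    obtain ⟨x, hx⟩ := (h c).2 (Sum.inr ⟨b₁, f⟩)
    rcases x with ⟨c', g⟩ | ⟨c', g⟩
    · exact absurd hx (by intro h'; cases h')
    · exact ⟨c', congrArg Sigma.fst (Sum.inr.inj hx)⟩
end

section
/- Let F: C → D and G: D → B be functors with G ∘ H = F where H: C → D, F and G connected coverings of B. If H and H' are two maps of coverings from F to G (functors C → D with G∘H = F = G∘H') that agree on some object of C, then H = H'. In particular the category of pointed connected coverings of B is sharp (each hom-set has at most one element). -/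
open CategoryTheory

universe w v v' v'' u u' u''

lemma sigma_src_ext {B : Type u'} [Category.{v'} B] {b x y : B} (h : x = y)
    (f : b ⟶ x) (g : b ⟶ y) (hfg : f = g ≫ eqToHom h.symm) :
    (⟨x, f⟩ : Σ c, b ⟶ c) = ⟨y, g⟩ := by subst h; simpa using hfg

lemma sigma_src_inj {B : Type u'} [Category.{v'} B] {b x y : B} {f : b ⟶ x} {g : b ⟶ y}
    (h : (⟨x, f⟩ : Σ c, b ⟶ c) = ⟨y, g⟩) : ∃ e : x = y, f = g ≫ eqToHom e.symm := by
  obtain ⟨e, he⟩ := Sigma.mk.inj_iff.mp h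
  subst e; exact ⟨rfl, by simpa using eq_of_heq he⟩

lemma sigma_tgt_ext {B : Type u'} [Category.{v'} B] {b x y : B} (h : x = y)
    (f : x ⟶ b) (g : y ⟶ b) (hfg : f = eqToHom h ≫ g) :
    (⟨x, f⟩ : Σ c, c ⟶ b) = ⟨y, g⟩ := by subst h; simpa using hfg

lemma sigma_tgt_inj {B : Type u'} [Category.{v'} B] {b x y : B} {f : x ⟶ b} {g : y ⟶ b}
    (h : (⟨x, f⟩ : Σ c, c ⟶ b) = ⟨y, g⟩) : ∃ e : x = y, f = eqToHom e ≫ g := by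
  obtain ⟨e, he⟩ := Sigma.mk.inj_iff.mp h
  subst e; exact ⟨rfl, by simpa using eq_of_heq he⟩

/-- Two maps of connected coverings which agree on some object are equal; in
particular the category of pointed connected coverings is sharp. -/
theorem maps_of_coverings_agreeing_on_object_eq
    {C : Type u} [Category.{v} C] {D : Type u'} [Category.{v'} D]
    {B : Type u''} [Category.{v''} B]
    (F : C ⥤ B) (G : D ⥤ B) (hF : IsCovering F) (hG : IsCovering G)
    (hCconn : IsConnected C) (hDconn : IsConnected D)
    (H H' : C ⥤ D) (hH : H ⋙ G = F) (hH' : H' ⋙ G = F)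
    (c : C) (hc : H.obj c = H'.obj c) : H = H' := by
  -- images of objects/morphisms under G ∘ H and G ∘ H' are given by F
  have hobjH : ∀ x : C, G.obj (H.obj x) = F.obj x := fun x => Functor.congr_obj hH x
  have hobjH' : ∀ x : C, G.obj (H'.obj x) = F.obj x := fun x => Functor.congr_obj hH' x
  have hmapH : ∀ {x y : C} (f : x ⟶ y),
      G.map (H.map f) = eqToHom (hobjH x) ≫ F.map f ≫ eqToHom (hobjH y).symm :=
    fun {x y} f => Functor.congr_hom hH f
  have hmapH' : ∀ {x y : C} (f : x ⟶ y),
      G.map (H'.map f) = eqToHom (hobjH' x) ≫ F.map f ≫ eqToHom (hobjH' y).symm :=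
    fun {x y} f => Functor.congr_hom hH' f
  -- forward propagation along a morphism
  have fwd : ∀ {x y : C} (f : x ⟶ y) (hx : H.obj x = H'.obj x),
      (⟨H.obj y, H.map f⟩ : Σ d, H.obj x ⟶ d) = ⟨H'.obj y, eqToHom hx ≫ H'.map f⟩ := by
    intro x y f hx
    have hinj := (hG.2 (H.obj x)).1
    have hstar : starMap G (H.obj x) (Sum.inl ⟨H.obj y, H.map f⟩) =
        starMap G (H.obj x) (Sum.inl ⟨H'.obj y, eqToHom hx ≫ H'.map f⟩) := by
      show (Sum.inl ⟨G.obj (H.obj y), G.map (H.map f)⟩ : CatStar (G.obj (H.obj x))) =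
        Sum.inl ⟨G.obj (H'.obj y), G.map (eqToHom hx ≫ H'.map f)⟩
      congr 1
      apply sigma_src_ext (by rw [hobjH y, hobjH' y])
      rw [hmapH f, G.map_comp, hmapH' f, eqToHom_map]
      simp
    exact Sum.inl_injective (hinj hstar)
  -- backward propagation along a morphism
  have bwd : ∀ {x y : C} (f : x ⟶ y) (hy : H.obj y = H'.obj y),
      (⟨H.obj x, H.map f⟩ : Σ d, d ⟶ H.obj y) = ⟨H'.obj x, H'.map f ≫ eqToHom hy.symm⟩ := by
    intro x y f hy
    have hinj := (hG.2 (H.obj y)).1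
    have hstar : starMap G (H.obj y) (Sum.inr ⟨H.obj x, H.map f⟩) =
        starMap G (H.obj y) (Sum.inr ⟨H'.obj x, H'.map f ≫ eqToHom hy.symm⟩) := by
      show (Sum.inr ⟨G.obj (H.obj x), G.map (H.map f)⟩ : CatStar (G.obj (H.obj y))) =
        Sum.inr ⟨G.obj (H'.obj x), G.map (H'.map f ≫ eqToHom hy.symm)⟩
      congr 1
      apply sigma_tgt_ext (by rw [hobjH x, hobjH' x])
      rw [hmapH f, G.map_comp, hmapH' f, eqToHom_map]
      simp
    exact Sum.inr_injective (hinj hstar)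
  -- objects agree everywhere, by connectedness
  have h_obj : ∀ x : C, H.obj x = H'.obj x := by
    intro x
    refine induct_on_objects {x : C | H.obj x = H'.obj x} hc ?_ x
    intro x y f
    constructor
    · intro hx
      obtain ⟨e, -⟩ := sigma_src_inj (fwd f hx)
      exact e
    · intro hy
      obtain ⟨e, -⟩ := sigma_tgt_inj (bwd f hy)
      exact e
  -- maps agree, using star injectivity again
  refine CategoryTheory.Functor.ext h_obj ?_
  intro x y f
  obtain ⟨e, he⟩ := sigma_src_inj (fwd f (h_obj x))
  rw [he]
  simp
end
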